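/- There exists a constant c₁ > 0 such that for every sufficiently large n there exists a cobipartite graph G on n vertices (the disjoint union of two cliques of size n/2 plus some edges between them) with lcc(G) > c₁·n/log n. -/

import Mathlib

open SimpleGraph Finset

/-- A clique covering of `G`: a family of cliques covering every edge. -/
def IsCliqueCover {V : Type*} [DecidableEq V] (G : SimpleGraph V)
    (C : Finset (Finset V)) : Prop :=
  (∀ s ∈ C, G.IsClique (s : Set V)) ∧ ∀ u v : V, G.Adj u v → ∃ s ∈ C, u ∈ s ∧ v ∈ s

/-- The local clique cover number: the least `k` such that `G` has a clique covering
in which every vertex lies in at most `k` cliques. -/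
noncomputable def lcc {V : Type*} [DecidableEq V] (G : SimpleGraph V) : ℕ :=
  sInf {k | ∃ C : Finset (Finset V), IsCliqueCover G C ∧
    ∀ x : V, (C.filter (fun s => x ∈ s)).card ≤ k}

lemma lcc_set_nonempty {V : Type*} [DecidableEq V] [Fintype V] (G : SimpleGraph V) :
    {k | ∃ C : Finset (Finset V), IsCliqueCover G C ∧
      ∀ x : V, (C.filter (fun s => x ∈ s)).card ≤ k}.Nonempty := by
  classical
  set P := (univ ×ˢ univ : Finset (V × V)).filter (fun p => G.Adj p.1 p.2) with hP
  set C := P.image (fun p => ({p.1, p.2} : Finset V)) with hC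
  refine ⟨C.card, C, ⟨?_, ?_⟩, fun x => card_le_card (filter_subset _ _)⟩
  · intro s hs
    rw [hC, mem_image] at hs
    obtain ⟨p, hp, rfl⟩ := hs
    rw [hP, mem_filter] at hp
    rw [coe_insert, coe_singleton]
    exact SimpleGraph.isClique_pair.2 (fun _ => hp.2)
  · intro u v huv
    refine ⟨{u, v}, ?_, by simp, by simp⟩
    exact mem_image_of_mem _ (show (u, v) ∈ P by rw [hP, mem_filter]; exact ⟨by simp, huv⟩)

lemma exists_cover {V : Type*} [DecidableEq V] [Fintype V] (G : SimpleGraph V) {t : ℕ}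
    (h : lcc G ≤ t) : ∃ C : Finset (Finset V), IsCliqueCover G C ∧
      ∀ x : V, (C.filter (fun s => x ∈ s)).card ≤ t := by
  obtain ⟨C, hC, hloc⟩ := Nat.sInf_mem (lcc_set_nonempty G)
  exact ⟨C, hC, fun x => le_trans (hloc x) h⟩

lemma encode {V : Type*} [DecidableEq V] [Fintype V] (G : SimpleGraph V) {t m : ℕ}
    (hm : Fintype.card V ≤ m) (h : lcc G ≤ t) :
    ∃ e : V → Fin t → Fin (m * t + 1),
      ∀ u v, G.Adj u v ↔ u ≠ v ∧ ∃ i j : Fin t, e u i = e v j ∧ e u i ≠ Fin.last (m * t) := by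
  classical
  obtain ⟨C, ⟨hclique, hcover⟩, hloc⟩ := exists_cover G h
  set f : V → Finset (Finset V) := fun x => C.filter (fun s => x ∈ s) with hf
  set U : Finset (Finset V) := univ.biUnion f with hU
  have hUcard : U.card ≤ m * t := by
    calc U.card ≤ ∑ x : V, (f x).card := card_biUnion_le
    _ ≤ ∑ _x : V, t := sum_le_sum (fun x _ => hloc x)
    _ = Fintype.card V * t := by rw [sum_const, card_univ, smul_eq_mul]
    _ ≤ m * t := Nat.mul_le_mul_right t hm
  set g : U → Fin (m * t) := fun s => Fin.castLE hUcard (U.equivFin s) with hg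
  have hginj : Function.Injective g := fun a b hab =>
    U.equivFin.injective (Fin.castLE_injective _ hab)
  have hmemU : ∀ (x : V) (s : Finset V), s ∈ f x → s ∈ U := fun x s hs =>
    mem_biUnion.2 ⟨x, mem_univ x, hs⟩
  have hft : ∀ x, (f x).card ≤ t := hloc
  set e : V → Fin t → Fin (m * t + 1) := fun x i =>
    if hx : (i : ℕ) < (f x).card then
      Fin.castSucc (g ⟨((f x).equivFin.symm ⟨i, hx⟩ : _), hmemU x _ (coe_mem _)⟩)
    else Fin.last (m * t) with he
  have key : ∀ (x : V) (s : Finset V) (hs : s ∈ f x),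
      ∃ i : Fin t, e x i = Fin.castSucc (g ⟨s, hmemU x s hs⟩) := by
    intro x s hs
    refine ⟨Fin.castLE (hft x) ((f x).equivFin ⟨s, hs⟩), ?_⟩
    have hlt : ((Fin.castLE (hft x) ((f x).equivFin ⟨s, hs⟩) : Fin t) : ℕ) < (f x).card := by
      simpa using ((f x).equivFin ⟨s, hs⟩).isLt
    rw [he]
    dsimp only
    rw [dif_pos hlt]
    congr 2
    have h1 : (⟨_, hlt⟩ : Fin (f x).card) = (f x).equivFin ⟨s, hs⟩ := Fin.ext rfl
    rw [h1, Equiv.symm_apply_apply]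
  have key2 : ∀ (x : V) (i : Fin t), e x i ≠ Fin.last (m * t) →
      ∃ (s : Finset V) (hs : s ∈ f x), e x i = Fin.castSucc (g ⟨s, hmemU x s hs⟩) := by
    intro x i hne
    rw [he] at hne ⊢
    dsimp only at hne ⊢
    by_cases hx : (i : ℕ) < (f x).card
    · rw [dif_pos hx] at hne ⊢
      exact ⟨_, coe_mem _, rfl⟩
    · rw [dif_neg hx] at hne
      exact absurd rfl hne
  refine ⟨e, fun u v => ⟨fun huv => ?_, fun ⟨hne, i, j, heq, hlast⟩ => ?_⟩⟩
  · refine ⟨huv.ne, ?_⟩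
    obtain ⟨s, hsC, hus, hvs⟩ := hcover u v huv
    have hsu : s ∈ f u := mem_filter.2 ⟨hsC, hus⟩
    have hsv : s ∈ f v := mem_filter.2 ⟨hsC, hvs⟩
    obtain ⟨i, hi⟩ := key u s hsu
    obtain ⟨j, hj⟩ := key v s hsv
    refine ⟨i, j, ?_, ?_⟩
    · rw [hi, hj]
    · rw [hi]; exact (Fin.castSucc_lt_last _).ne
  · obtain ⟨s, hs, hes⟩ := key2 u i hlast
    obtain ⟨s', hs', hes'⟩ := key2 v j (heq ▸ hlast)
    have : s = s' := by
      have h2 : g ⟨s, hmemU u s hs⟩ = g ⟨s', hmemU v s' hs'⟩ :=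
        Fin.castSucc_injective _ (by rw [← hes, ← hes', heq])
      exact Subtype.ext_iff.1 (hginj h2)
    subst this
    have h3 := mem_filter.1 hs
    have h4 := mem_filter.1 hs'
    exact hclique s h3.1 h3.2 h4.2 hne

def GS (n : ℕ) (S : Finset (Fin n × Fin n)) : SimpleGraph (Fin n) where
  Adj u v := u ≠ v ∧ ((((u : ℕ) < n / 2) ↔ ((v : ℕ) < n / 2)) ∨ (u, v) ∈ S ∨ (v, u) ∈ S)
  symm := by
    constructor
    rintro u v ⟨h1, h2⟩
    exact ⟨h1.symm, by tauto⟩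
  loopless := by constructor; rintro u ⟨h, -⟩; exact h rfl

lemma card_filter_val_lt (n m : ℕ) (h : m ≤ n) :
    ((univ : Finset (Fin n)).filter fun i : Fin n => (i : ℕ) < m).card = m := by
  have : ((univ : Finset (Fin n)).filter fun i : Fin n => (i : ℕ) < m).card
      = (Finset.range m).card := Finset.card_bij' (fun (i : Fin n) _ => (i : ℕ))
    (fun j hj => (⟨j, lt_of_lt_of_le (Finset.mem_range.1 hj) h⟩ : Fin n))
    (fun a ha => Finset.mem_range.2 (Finset.mem_filter.1 ha).2)
    (fun a ha => Finset.mem_filter.2 ⟨Finset.mem_univ _, Finset.mem_range.1 ha⟩)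
    (fun a ha => rfl) (fun a ha => rfl)
  rw [this, Finset.card_range]

lemma GS_inj (n : ℕ) (S₁ S₂ : Finset (Fin n × Fin n))
    (h₁ : ∀ p ∈ S₁, (p.1 : ℕ) < n / 2 ∧ ¬ (p.2 : ℕ) < n / 2)
    (h₂ : ∀ p ∈ S₂, (p.1 : ℕ) < n / 2 ∧ ¬ (p.2 : ℕ) < n / 2)
    (h : ∀ u v, (GS n S₁).Adj u v ↔ (GS n S₂).Adj u v) : S₁ = S₂ := by
  have main : ∀ (T₁ T₂ : Finset (Fin n × Fin n)),
      (∀ p ∈ T₁, (p.1 : ℕ) < n / 2 ∧ ¬ (p.2 : ℕ) < n / 2) →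
      (∀ p ∈ T₂, (p.1 : ℕ) < n / 2 ∧ ¬ (p.2 : ℕ) < n / 2) →
      (∀ u v, (GS n T₁).Adj u v → (GS n T₂).Adj u v) → T₁ ⊆ T₂ := by
    intro T₁ T₂ g₁ g₂ hadj p hp
    obtain ⟨hp1, hp2⟩ := g₁ p hp
    have hne : p.1 ≠ p.2 := fun he => hp2 (he ▸ hp1)
    have : (GS n T₁).Adj p.1 p.2 := ⟨hne, Or.inr (Or.inl hp)⟩
    obtain ⟨-, hor⟩ := hadj _ _ this
    rcases hor with hiff | hm | hm
    · exact absurd (hiff.1 hp1) hp2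
    · exact hm
    · exact absurd (g₂ _ hm).1 hp2
  exact Finset.Subset.antisymm (main S₁ S₂ h₁ h₂ fun u v => (h u v).1)
    (main S₂ S₁ h₂ h₁ fun u v => (h u v).2)

lemma numeric (k t n a c : ℕ) (h25 : t * (25 * (k + 1)) ≤ n) (hn : n ≤ 2 * a + 1)
    (ha : 1 ≤ a) (hca : a ≤ c) : 2 * (k + 1) * (t * n) < a * c := by
  zify at *
  nlinarith [mul_nonneg (mul_nonneg (Int.ofNat_nonneg t) (Int.ofNat_nonneg n)) (Int.ofNat_nonneg k),
    mul_le_mul_of_nonneg_right h25 (by positivity : (0:ℤ) ≤ 2 * n),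
    mul_le_mul_of_nonneg_left hca (Int.ofNat_nonneg a),
    sq_nonneg ((a : ℤ) - 1), mul_pos (by exact_mod_cast ha : (0:ℤ) < a) (by linarith : (0:ℤ) < (c:ℤ))]

lemma pow_bound (k t n a c : ℕ) (hn2 : n < 2 ^ (k + 1)) (htn : t ≤ n)
    (h25 : t * (25 * (k + 1)) ≤ n) (hn : n ≤ 2 * a + 1) (ha : 1 ≤ a) (hca : a ≤ c) :
    (n * t + 1) ^ (t * n) < 2 ^ (a * c) := by
  have h1 : n * t + 1 ≤ 2 ^ (2 * (k + 1)) := by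
    have : n + 1 ≤ 2 ^ (k + 1) := hn2
    calc n * t + 1 ≤ n * n + 1 := by nlinarith
    _ ≤ 2 ^ (k + 1) * 2 ^ (k + 1) := by nlinarith
    _ = 2 ^ (2 * (k + 1)) := by rw [← pow_add]; ring_nf
  calc (n * t + 1) ^ (t * n) ≤ (2 ^ (2 * (k + 1))) ^ (t * n) := Nat.pow_le_pow_left h1 _
  _ = 2 ^ (2 * (k + 1) * (t * n)) := (pow_mul 2 _ _).symm
  _ < 2 ^ (a * c) := Nat.pow_lt_pow_right one_lt_two (numeric k t n a c h25 hn ha hca)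

theorem stmt10 : ∃ c₁ : ℝ, 0 < c₁ ∧ ∃ N : ℕ, ∀ n : ℕ, N ≤ n →
    ∃ G : SimpleGraph (Fin n),
      (∃ A B : Finset (Fin n), A ∪ B = Finset.univ ∧ Disjoint A B ∧
        A.card = n / 2 ∧ G.IsClique (A : Set (Fin n)) ∧ G.IsClique (B : Set (Fin n))) ∧
      c₁ * (n : ℝ) / Real.logb 2 (n : ℝ) < (lcc G : ℝ) := by
  classical
  refine ⟨1/50, by norm_num, 100, fun n hn => ?_⟩
  by_contra hcon
  push_neg at hcon
  set k := Nat.log 2 n with hk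
  set t := n / (25 * (k + 1)) with ht
  set a := n / 2 with ha
  set A : Finset (Fin n) := univ.filter (fun i : Fin n => (i : ℕ) < n / 2) with hA
  set B : Finset (Fin n) := univ.filter (fun i : Fin n => ¬ (i : ℕ) < n / 2) with hB
  have hAB : A ∪ B = univ := filter_union_filter_not_eq _ _
  have hdisj : Disjoint A B := disjoint_filter_filter_not _ _ _
  have hAcard : A.card = n / 2 := card_filter_val_lt n (n / 2) (Nat.div_le_self n 2)
  have hABcard : A.card + B.card = n := by
    rw [card_filter_add_card_filter_not, card_univ, Fintype.card_fin]
  have hBcard : B.card = n - a := by omega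
  have hmemA : ∀ x : Fin n, x ∈ A ↔ (x : ℕ) < n / 2 := by
    intro x; rw [hA, mem_filter]; simp
  have hmemB : ∀ x : Fin n, x ∈ B ↔ ¬ (x : ℕ) < n / 2 := by
    intro x; rw [hB, mem_filter]; simp
  -- structure of each GS n S
  have hstruct : ∀ S : Finset (Fin n × Fin n),
      ∃ A' B' : Finset (Fin n), A' ∪ B' = Finset.univ ∧ Disjoint A' B' ∧
        A'.card = n / 2 ∧ (GS n S).IsClique (A' : Set (Fin n)) ∧
        (GS n S).IsClique (B' : Set (Fin n)) := by
    intro S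
    refine ⟨A, B, hAB, hdisj, hAcard, ?_, ?_⟩
    · intro u hu v hv hne
      rw [mem_coe, hmemA] at hu hv
      exact ⟨hne, Or.inl (iff_of_true hu hv)⟩
    · intro u hu v hv hne
      rw [mem_coe, hmemB] at hu hv
      exact ⟨hne, Or.inl (iff_of_false hu hv)⟩
  -- real-analytic bound : (1/50) n / logb 2 n < t + 1
  have hn2 : (2 : ℕ) ≤ n := le_trans (by norm_num) hn
  have hL1 : (1 : ℝ) ≤ Real.logb 2 n := by
    rw [show (1:ℝ) = Real.logb 2 2 by simp]
    exact Real.logb_le_logb_of_le (by norm_num) (by norm_num) (by exact_mod_cast hn2)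
  have hkL : (k : ℝ) ≤ Real.logb 2 n := by
    have h2k : (2 : ℕ) ^ k ≤ n := Nat.pow_log_le_self 2 (by omega)
    have h3 : Real.logb 2 ((2:ℝ) ^ k) ≤ Real.logb 2 n :=
      Real.logb_le_logb_of_le (by norm_num) (by positivity) (by exact_mod_cast h2k)
    rwa [Real.logb_pow, Real.logb_self_eq_one (by norm_num), mul_one] at h3
  have hmod : n < 25 * (k + 1) * (t + 1) := by
    have h2 : n % (25 * (k + 1)) < 25 * (k + 1) := Nat.mod_lt _ (by positivity)
    calc n = 25 * (k + 1) * t + n % (25 * (k + 1)) := by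
            rw [ht]; exact (Nat.div_add_mod _ _).symm
    _ < 25 * (k + 1) * t + 25 * (k + 1) := Nat.add_lt_add_left h2 _
    _ = 25 * (k + 1) * (t + 1) := by ring
  have hreal : (1/50 : ℝ) * n / Real.logb 2 n < (t : ℝ) + 1 := by
    have hstep1 : (1/50 : ℝ) * n / Real.logb 2 n ≤ (n : ℝ) / (25 * ((k : ℝ) + 1)) := by
      rw [div_le_div_iff₀ (by linarith) (by positivity)]
      have hn0 : (0:ℝ) ≤ (n:ℝ) := Nat.cast_nonneg n
      nlinarith
    have hstep2 : (n : ℝ) / (25 * ((k : ℝ) + 1)) < (t : ℝ) + 1 := by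
      rw [div_lt_iff₀ (by positivity)]
      have : (n : ℝ) < 25 * ((k:ℝ) + 1) * ((t:ℝ) + 1) := by exact_mod_cast hmod
      linarith
    linarith
  -- all the graphs have lcc ≤ t
  have hlcc : ∀ S : Finset (Fin n × Fin n), lcc (GS n S) ≤ t := by
    intro S
    have h1 := hcon (GS n S) (hstruct S)
    have h2 : (lcc (GS n S) : ℝ) < (t : ℝ) + 1 := lt_of_le_of_lt h1 hreal
    have h3 : lcc (GS n S) < t + 1 := by exact_mod_cast h2
    omega
  -- encoding injection
  have hcardV : Fintype.card (Fin n) ≤ n := le_of_eq (Fintype.card_fin n)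
  set Φ : Finset (Fin n × Fin n) → (Fin n → Fin t → Fin (n * t + 1)) :=
    fun S => Classical.choose (encode (GS n S) hcardV (hlcc S)) with hΦ
  have hspec : ∀ S : Finset (Fin n × Fin n), ∀ u v, (GS n S).Adj u v ↔
      u ≠ v ∧ ∃ i j : Fin t, Φ S u i = Φ S v j ∧ Φ S u i ≠ Fin.last (n * t) :=
    fun S => Classical.choose_spec (encode (GS n S) hcardV (hlcc S))
  have hinj : Set.InjOn Φ ((A ×ˢ B).powerset : Finset (Finset (Fin n × Fin n))) := by
    intro S₁ h₁ S₂ h₂ heq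
    rw [mem_coe, mem_powerset] at h₁ h₂
    have hside : ∀ (T : Finset (Fin n × Fin n)), T ⊆ A ×ˢ B →
        ∀ p ∈ T, (p.1 : ℕ) < n / 2 ∧ ¬ (p.2 : ℕ) < n / 2 := by
      intro T hT p hp
      have := mem_product.1 (hT hp)
      exact ⟨(hmemA p.1).1 this.1, (hmemB p.2).1 this.2⟩
    refine GS_inj n S₁ S₂ (hside S₁ h₁) (hside S₂ h₂) ?_
    intro u v
    rw [hspec S₁, hspec S₂, heq]
  have hcount : (A ×ˢ B).powerset.card ≤
      Fintype.card (Fin n → Fin t → Fin (n * t + 1)) := by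
    rw [← Finset.card_univ]
    exact Finset.card_le_card_of_injOn Φ (fun _ _ => mem_univ _) hinj
  have hle : 2 ^ (a * (n - a)) ≤ (n * t + 1) ^ (t * n) := by
    have e1 : (A ×ˢ B).powerset.card = 2 ^ (a * (n - a)) := by
      rw [card_powerset, card_product, hAcard, hBcard, ← ha]
    have e2 : Fintype.card (Fin n → Fin t → Fin (n * t + 1)) = (n * t + 1) ^ (t * n) := by
      rw [Fintype.card_fun, Fintype.card_fun, Fintype.card_fin, Fintype.card_fin,
        Fintype.card_fin, ← pow_mul]
    rw [e1, e2] at hcount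
    exact hcount
  have hlt : (n * t + 1) ^ (t * n) < 2 ^ (a * (n - a)) := by
    refine pow_bound k t n a (n - a) ?_ ?_ ?_ ?_ ?_ ?_
    · exact Nat.lt_pow_succ_log_self (by norm_num) n
    · exact Nat.div_le_self _ _
    · exact Nat.div_mul_le_self _ _
    · omega
    · omega
    · omega
  exact absurd hle (not_le.2 hlt)
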